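/- Let V be a finite-dimensional real inner product space, let e : Fin d → V be a family of vectors (not necessarily linearly independent), let G be its Gram matrix, and let B be any generalized inverse of G. Let ω : V →ₗ[ℝ] ℝ be a linear functional and let v ∈ V be the vector satisfying ⟪v, w⟫ = ω w for all w ∈ V. Then the orthogonal projection of v onto the subspace Submodule.span ℝ (Set.range e) equals ∑ i, ∑ j, (B i j * ω (e j)) • e i. -/

import Mathlib

open scoped RealInnerProductSpace

theorem gram_generalized_inverse_projection
    {d : ℕ} {V : Type*} [NormedAddCommGroup V] [InnerProductSpace ℝ V]
    [FiniteDimensional ℝ V] (e : Fin d → V)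
    (G B : Matrix (Fin d) (Fin d) ℝ)
    (hG : ∀ i j, G i j = ⟪e i, e j⟫)
    (hB : G * B * G = G)
    (ω : V →ₗ[ℝ] ℝ) (v : V) (hv : ∀ w : V, ⟪v, w⟫ = ω w) :
    (Submodule.orthogonalProjection (Submodule.span ℝ (Set.range e)) v : V)
      = ∑ i, ∑ j, (B i j * ω (e j)) • e i := by
  set K := Submodule.span ℝ (Set.range e) with hK
  set c : Fin d → ℝ := fun j => ω (e j) with hc
  -- projection is a combination
  have hPmem : (Submodule.orthogonalProjection K v : V) ∈ K := (Submodule.orthogonalProjection K v).2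
  rw [hK, Submodule.mem_span_range_iff_exists_fun] at hPmem
  obtain ⟨x, hx⟩ := hPmem
  have hGsym : ∀ i j, G i j = G j i := by
    intro i j; rw [hG, hG, real_inner_comm]
  -- c = G *ᵥ x
  have hcx : ∀ j, c j = (G.mulVec x) j := by
    intro j
    have h1 : ⟪v - (Submodule.orthogonalProjection K v : V), e j⟫ = 0 := by
      apply Submodule.inner_left_of_mem_orthogonal (K := K)
      · exact Submodule.subset_span ⟨j, rfl⟩
      · exact Submodule.sub_starProjection_mem_orthogonal v
    have h2 : (⟪v, e j⟫ : ℝ) = ⟪(Submodule.orthogonalProjection K v : V), e j⟫ := by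
      rw [inner_sub_left, sub_eq_zero] at h1; exact h1
    show (ω (e j) : ℝ) = G.mulVec x j
    rw [← hv, h2, ← hx, sum_inner, Matrix.mulVec]
    simp only [dotProduct, real_inner_smul_left, ← hG]
    exact Finset.sum_congr rfl fun i _ => by rw [hGsym j i]; ring
  have hcv : c = G.mulVec x := funext hcx
  have hGBc : G.mulVec (B.mulVec c) = c := by
    rw [hcv, Matrix.mulVec_mulVec, Matrix.mulVec_mulVec, hB]
  rw [← Submodule.starProjection_apply]; apply Submodule.eq_starProjection_of_mem_of_inner_eq_zero
  · exact Submodule.sum_mem _ fun i _ => Submodule.sum_mem _ fun j _ =>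
      Submodule.smul_mem _ _ (Submodule.subset_span ⟨i, rfl⟩)
  · intro w hw
    induction hw using Submodule.span_induction with
    | mem y hy =>
      obtain ⟨k, rfl⟩ := hy
      rw [inner_sub_left]
      have hp : ⟪∑ i, ∑ j, (B i j * ω (e j)) • e i, e k⟫
          = (G.mulVec (B.mulVec c)) k := by
        rw [sum_inner]
        simp only [sum_inner, real_inner_smul_left, Matrix.mulVec, dotProduct]
        refine Finset.sum_congr rfl fun i _ => ?_
        rw [Finset.mul_sum]
        refine Finset.sum_congr rfl fun j _ => ?_
        rw [← hG i k, hGsym k i, hc]; ring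
      rw [hp, hGBc, hv]; simp [hc]
    | zero => simp
    | add y z _ _ hy hz => rw [inner_add_right, hy, hz]; ring
    | smul a y _ hy => rw [real_inner_smul_right, hy]; ring
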